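/- Let d ≥ 1 and T ≥ 1, and let U₁, …, U_T be d × d unitary complex matrices. For t ∈ {1, …, T}, define the d(T+1) × d(T+1) complex matrix H_t = (1/2)·I_d ⊗ (E_{t,t} + E_{t−1,t−1}) − (1/2)·U_t ⊗ E_{t,t−1} − (1/2)·U_t† ⊗ E_{t−1,t}, where E_{s,s'} denotes the (T+1) × (T+1) matrix with a single 1 in position (s, s'), and set H_prop = Σ_{t=1}^{T} H_t. Then H_prop is positive semi-definite, and a vector ψ, viewed as a function from {0,…,d−1} × {0,…,T} to ℂ, satisfies H_prop ψ = 0 if and only if there exists a vector φ ∈ ℂ^d such that for every t ∈ {0,…,T}, the column ψ(·, t) equals (U_t U_{t−1} ⋯ U₁) φ (with the empty product for t = 0 being the identity). In particular, the kernel of H_prop has dimension d. -/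

import Mathlib

open Matrix
open scoped Kronecker ComplexOrder

/-- The Feynman–Kitaev propagation Hamiltonian of the circuit `U_T ⋯ U₁` with an
explicit `(T+1)`-dimensional clock register:
`H_prop = Σ_t [(1/2)·I ⊗ (E_{t,t} + E_{t−1,t−1}) − (1/2)·U_t ⊗ E_{t,t−1} − (1/2)·U_t† ⊗ E_{t−1,t}]`. -/
noncomputable def Hprop (d T : ℕ) (U : Fin T → Matrix (Fin d) (Fin d) ℂ) :
    Matrix (Fin d × Fin (T + 1)) (Fin d × Fin (T + 1)) ℂ :=
  ∑ t : Fin T,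
    ((1 / 2 : ℂ) • ((1 : Matrix (Fin d) (Fin d) ℂ) ⊗ₖ
        (single t.succ t.succ (1 : ℂ) + single t.castSucc t.castSucc (1 : ℂ)))
      - (1 / 2 : ℂ) • (U t ⊗ₖ single t.succ t.castSucc (1 : ℂ))
      - (1 / 2 : ℂ) • ((U t)ᴴ ⊗ₖ single t.castSucc t.succ (1 : ℂ)))

/-- The ordered product `U_k ⋯ U₁` of the first `k` gates (the empty product for
`k = 0` being the identity). -/
noncomputable def prodUpTo {d T : ℕ} (U : Fin T → Matrix (Fin d) (Fin d) ℂ) :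
    ℕ → Matrix (Fin d) (Fin d) ℂ
  | 0 => 1
  | k + 1 => (if h : k < T then U ⟨k, h⟩ else 1) * prodUpTo U k

noncomputable def Aop (d T : ℕ) (U : Fin T → Matrix (Fin d) (Fin d) ℂ) (t : Fin T) :
    Matrix (Fin d × Fin (T + 1)) (Fin d × Fin (T + 1)) ℂ :=
  (1 : Matrix (Fin d) (Fin d) ℂ) ⊗ₖ single t.succ t.succ (1 : ℂ)
    - U t ⊗ₖ single t.succ t.castSucc (1 : ℂ)

lemma kron_conjT {m n p q : Type*} [Fintype m] [Fintype n] [Fintype p] [Fintype q]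
    (A : Matrix m n ℂ) (B : Matrix p q ℂ) : (A ⊗ₖ B)ᴴ = Aᴴ ⊗ₖ Bᴴ := by
  ext ⟨i, s⟩ ⟨j, s'⟩
  simp [conjTranspose_apply, kroneckerMap_apply, mul_comm]

lemma stdb_conjT {n : Type*} [DecidableEq n] (i j : n) :
    (single i j (1 : ℂ))ᴴ = single j i (1 : ℂ) := by
  ext a b
  simp [conjTranspose_apply, single_apply, and_comm, apply_ite]

lemma summand_eq (d T : ℕ) (U : Fin T → Matrix (Fin d) (Fin d) ℂ)
    (hU : ∀ t, U t ∈ Matrix.unitaryGroup (Fin d) ℂ) (t : Fin T) :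
    ((1 / 2 : ℂ) • ((1 : Matrix (Fin d) (Fin d) ℂ) ⊗ₖ
        (single t.succ t.succ (1 : ℂ) + single t.castSucc t.castSucc (1 : ℂ)))
      - (1 / 2 : ℂ) • (U t ⊗ₖ single t.succ t.castSucc (1 : ℂ))
      - (1 / 2 : ℂ) • ((U t)ᴴ ⊗ₖ single t.castSucc t.succ (1 : ℂ)))
    = (1 / 2 : ℂ) • ((Aop d T U t)ᴴ * Aop d T U t) := by
  have hU1 : (U t)ᴴ * U t = 1 := by
    have := (hU t).1
    rwa [star_eq_conjTranspose] at this
  rw [Aop, conjTranspose_sub, kron_conjT, kron_conjT, stdb_conjT, stdb_conjT,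
    conjTranspose_one, sub_mul, mul_sub, mul_sub, ← mul_kronecker_mul, ← mul_kronecker_mul,
    ← mul_kronecker_mul, ← mul_kronecker_mul, single_mul_single_same, single_mul_single_same,
    single_mul_single_same, single_mul_single_same, hU1]
  simp only [one_mul, mul_one, kronecker_add, smul_add, smul_sub]
  abel

lemma Hprop_eq (d T : ℕ) (U : Fin T → Matrix (Fin d) (Fin d) ℂ)
    (hU : ∀ t, U t ∈ Matrix.unitaryGroup (Fin d) ℂ) :
    Hprop d T U = ∑ t : Fin T, (1 / 2 : ℂ) • ((Aop d T U t)ᴴ * Aop d T U t) :=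
  Finset.sum_congr rfl fun t _ => summand_eq d T U hU t

lemma half_smul_psd {n : Type*} [Fintype n] [DecidableEq n] {M : Matrix n n ℂ}
    (h : M.PosSemidef) : ((1 / 2 : ℂ) • M).PosSemidef := by
  constructor
  · have : star (1 / 2 : ℂ) = (1 / 2 : ℂ) := by
      simp [star_div₀, Complex.star_def]
    unfold Matrix.IsHermitian
    rw [conjTranspose_smul, this, h.1.eq]
  · intro x
    exact (h.smul (a := (1 / 2 : ℂ)) (by rw [Complex.le_def]; norm_num)).2 x

lemma Aop_mulVec_apply (d T : ℕ) (U : Fin T → Matrix (Fin d) (Fin d) ℂ) (t : Fin T)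
    (ψ : Fin d × Fin (T + 1) → ℂ) (i : Fin d) (s : Fin (T + 1)) :
    (Aop d T U t).mulVec ψ (i, s) =
      if t.succ = s then ψ (i, t.succ) - (U t).mulVec (fun j => ψ (j, t.castSucc)) i
      else 0 := by
  simp only [Aop, mulVec, dotProduct, Fintype.sum_prod_type, Matrix.sub_apply, kroneckerMap_apply,
    single_apply, of_apply, one_apply, Matrix.mulVec, dotProduct]
  by_cases hs : t.succ = s
  · subst hs
    simp [ite_and, sub_mul, ite_mul, Finset.sum_sub_distrib, Finset.sum_ite_eq,
      Finset.sum_ite_eq', mul_comm]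
  · simp [Ne.symm hs, ite_and, sub_mul, ite_mul, hs]

lemma Aop_mulVec_eq_zero (d T : ℕ) (U : Fin T → Matrix (Fin d) (Fin d) ℂ) (t : Fin T)
    (ψ : Fin d × Fin (T + 1) → ℂ) :
    (Aop d T U t).mulVec ψ = 0 ↔
      (fun i => ψ (i, t.succ)) = (U t).mulVec (fun j => ψ (j, t.castSucc)) := by
  constructor
  · intro h
    funext i
    have := congrFun h (i, t.succ)
    rw [Aop_mulVec_apply] at this
    simpa [sub_eq_zero] using this
  · intro h
    funext ⟨i, s⟩
    rw [Aop_mulVec_apply]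
    by_cases hs : t.succ = s
    · subst hs
      simpa [sub_eq_zero] using congrFun h i
    · simp [hs]

/-- column relations ↔ history state -/
lemma colRel_iff_history (d T : ℕ) (U : Fin T → Matrix (Fin d) (Fin d) ℂ)
    (ψ : Fin d × Fin (T + 1) → ℂ) :
    (∀ t : Fin T, (fun i => ψ (i, t.succ)) = (U t).mulVec (fun j => ψ (j, t.castSucc)))
    ↔ ∃ φ : Fin d → ℂ, ∀ t : Fin (T + 1),
        (fun i => ψ (i, t)) = (prodUpTo U (t : ℕ)).mulVec φ := by
  constructor
  · intro h
    refine ⟨fun i => ψ (i, 0), ?_⟩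
    intro t
    induction t using Fin.induction with
    | zero => simp [prodUpTo]
    | succ t ih =>
      have hs : ((t.succ : Fin (T + 1)) : ℕ) = (t : ℕ) + 1 := rfl
      rw [hs]
      show _ = (prodUpTo U ((t : ℕ) + 1)).mulVec _
      simp only [Fin.coe_castSucc] at ih
      rw [prodUpTo, dif_pos t.isLt, ← mulVec_mulVec, Fin.eta, ← ih]
      exact h t
  · rintro ⟨φ, hφ⟩ t
    have h1 := hφ t.castSucc
    have h2 := hφ t.succ
    have hs : ((t.succ : Fin (T + 1)) : ℕ) = (t : ℕ) + 1 := rfl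
    have hc : ((t.castSucc : Fin (T + 1)) : ℕ) = (t : ℕ) := rfl
    rw [hs] at h2
    rw [hc] at h1
    rw [h2, h1, prodUpTo, dif_pos t.isLt, Fin.eta, ← mulVec_mulVec]

lemma Hprop_posSemidef (d T : ℕ) (U : Fin T → Matrix (Fin d) (Fin d) ℂ)
    (hU : ∀ t, U t ∈ Matrix.unitaryGroup (Fin d) ℂ) : (Hprop d T U).PosSemidef := by
  rw [Hprop_eq d T U hU]
  refine Finset.sum_induction _ _ (fun a b ha hb => ha.add hb) ?_ ?_
  · exact Matrix.PosSemidef.zero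
  · intro t _
    exact half_smul_psd (posSemidef_conjTranspose_mul_self _)

lemma Hprop_mulVec_zero_iff (d T : ℕ) (U : Fin T → Matrix (Fin d) (Fin d) ℂ)
    (hU : ∀ t, U t ∈ Matrix.unitaryGroup (Fin d) ℂ) (ψ : Fin d × Fin (T + 1) → ℂ) :
    (Hprop d T U).mulVec ψ = 0 ↔
      ∀ t : Fin T, (fun i => ψ (i, t.succ)) = (U t).mulVec (fun j => ψ (j, t.castSucc)) := by
  rw [← (Hprop_posSemidef d T U hU).dotProduct_mulVec_zero_iff]
  rw [Hprop_eq d T U hU]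
  have key : star ψ ⬝ᵥ (∑ t : Fin T, (1 / 2 : ℂ) • ((Aop d T U t)ᴴ * Aop d T U t)) *ᵥ ψ
      = ∑ t : Fin T, (1 / 2 : ℂ) * (star ((Aop d T U t).mulVec ψ) ⬝ᵥ (Aop d T U t).mulVec ψ) := by
    have hsum : (∑ t : Fin T, (1 / 2 : ℂ) • ((Aop d T U t)ᴴ * Aop d T U t)) *ᵥ ψ
        = ∑ t : Fin T, ((1 / 2 : ℂ) • ((Aop d T U t)ᴴ * Aop d T U t)) *ᵥ ψ := by
      funext p
      simp only [mulVec, dotProduct, Matrix.sum_apply, Finset.sum_apply, Finset.sum_mul]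
      rw [Finset.sum_comm]
    have hdot : star ψ ⬝ᵥ (∑ t : Fin T, ((1 / 2 : ℂ) • ((Aop d T U t)ᴴ * Aop d T U t)) *ᵥ ψ)
        = ∑ t : Fin T, star ψ ⬝ᵥ (((1 / 2 : ℂ) • ((Aop d T U t)ᴴ * Aop d T U t)) *ᵥ ψ) := by
      simp only [dotProduct, Finset.sum_apply, Finset.mul_sum]
      rw [Finset.sum_comm]
    rw [hsum, hdot]
    refine Finset.sum_congr rfl fun t _ => ?_
    rw [smul_mulVec, dotProduct_smul, smul_eq_mul, ← mulVec_mulVec,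
      dotProduct_mulVec, ← star_mulVec]
  rw [key]
  rw [Finset.sum_eq_zero_iff_of_nonneg (fun t _ =>
    mul_nonneg (by rw [Complex.le_def]; norm_num) (dotProduct_star_self_nonneg _))]
  constructor
  · intro h t
    have := h t (Finset.mem_univ t)
    have h2 : star ((Aop d T U t).mulVec ψ) ⬝ᵥ (Aop d T U t).mulVec ψ = 0 := by
      have h12 : (1 / 2 : ℂ) ≠ 0 := by norm_num
      exact (mul_eq_zero.mp this).resolve_left h12
    exact (Aop_mulVec_eq_zero d T U t ψ).mp (dotProduct_star_self_eq_zero.mp h2)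
  · intro h t _
    rw [(Aop_mulVec_eq_zero d T U t ψ).mpr (h t)]
    simp

/-- `H_prop` is positive semi-definite, its null space consists exactly of the
history states (i.e. `ψ(·, t) = U_t ⋯ U₁ φ` for some `φ ∈ ℂ^d`), and in
particular its kernel has dimension `d`. -/
theorem Hprop_kernel
    (d T : ℕ) (hd : 1 ≤ d) (hT : 1 ≤ T)
    (U : Fin T → Matrix (Fin d) (Fin d) ℂ)
    (hU : ∀ t, U t ∈ Matrix.unitaryGroup (Fin d) ℂ) :
    (Hprop d T U).PosSemidef ∧
    (∀ ψ : Fin d × Fin (T + 1) → ℂ,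
      (Hprop d T U).mulVec ψ = 0 ↔
        ∃ φ : Fin d → ℂ, ∀ t : Fin (T + 1),
          (fun i => ψ (i, t)) = (prodUpTo U (t : ℕ)).mulVec φ) ∧
    Module.finrank ℂ (LinearMap.ker (Hprop d T U).mulVecLin) = d := by
  have hker : ∀ ψ : Fin d × Fin (T + 1) → ℂ,
      (Hprop d T U).mulVec ψ = 0 ↔
        ∃ φ : Fin d → ℂ, ∀ t : Fin (T + 1),
          (fun i => ψ (i, t)) = (prodUpTo U (t : ℕ)).mulVec φ := fun ψ =>
    (Hprop_mulVec_zero_iff d T U hU ψ).trans (colRel_iff_history d T U ψ)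
  refine ⟨Hprop_posSemidef d T U hU, hker, ?_⟩
  -- the history-state embedding
  let L : (Fin d → ℂ) →ₗ[ℂ] (Fin d × Fin (T + 1) → ℂ) :=
    { toFun := fun φ p => (prodUpTo U (p.2 : ℕ)).mulVec φ p.1
      map_add' := by
        intro x y; funext p; simp [Matrix.mulVec_add]
      map_smul' := by
        intro c x; funext p; simp [Matrix.mulVec_smul] }
  have hLinj : Function.Injective L := by
    rw [← LinearMap.ker_eq_bot, LinearMap.ker_eq_bot']
    intro φ hφ
    funext i
    have := congrFun hφ (i, 0)
    simpa [L, prodUpTo] using this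
  have hrange : LinearMap.range L = LinearMap.ker (Hprop d T U).mulVecLin := by
    ext ψ
    rw [LinearMap.mem_ker, Matrix.mulVecLin_apply, hker ψ, LinearMap.mem_range]
    constructor
    · rintro ⟨φ, rfl⟩
      exact ⟨φ, fun t => rfl⟩
    · rintro ⟨φ, hφ⟩
      refine ⟨φ, ?_⟩
      funext ⟨i, s⟩
      exact (congrFun (hφ s) i).symm
  rw [← hrange, LinearMap.finrank_range_of_inj hLinj]
  simp [Module.finrank_fin_fun]
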